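/- A topological space X is e*-R_1 if and only if e*-cl_θ({x}) = e*-cl({x}) for every x ∈ X, where X is e*-R_1 means: for all x, y ∈ X with e*-cl({x}) ≠ e*-cl({y}), there exist disjoint e*-open sets U, V with e*-cl({x}) ⊆ U and e*-cl({y}) ⊆ V. -/
import Mathlib


open Set Topology

variable {X : Type*} [TopologicalSpace X]

/-- δ-closure of A. -/
def deltaCl (A : Set X) : Set X :=
  {x | ∀ U : Set X, IsOpen U → x ∈ U → (interior (closure U) ∩ A).Nonempty}

/-- A is e*-open if A ⊆ cl(int(δ-cl A)). -/
def EStarOpen (A : Set X) : Prop := A ⊆ closure (interior (deltaCl A))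

/-- A is e*-closed if its complement is e*-open. -/
def EStarClosed (A : Set X) : Prop := EStarOpen Aᶜ

/-- e*-closure: intersection of all e*-closed supersets. -/
def eStarCl (A : Set X) : Set X := ⋂₀ {F | EStarClosed F ∧ A ⊆ F}

/-- e*-interior: union of all e*-open subsets. -/
def eStarInt (A : Set X) : Set X := ⋃₀ {U | EStarOpen U ∧ U ⊆ A}

/-- e*-regular: both e*-open and e*-closed. -/
def EStarRegular (A : Set X) : Prop := EStarOpen A ∧ EStarClosed A

/-- e*-θ-closure. -/
def eStarClTheta (A : Set X) : Set X :=
  {x | ∀ U : Set X, EStarOpen U → x ∈ U → (eStarCl U ∩ A).Nonempty}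

/-- e*-θ-closed. -/
def EStarThetaClosed (A : Set X) : Prop := A = eStarClTheta A

/-- e*-θ-open. -/
def EStarThetaOpen (A : Set X) : Prop := EStarThetaClosed Aᶜ

/-- quasi e*-θ-closed. -/
def QEStarThetaClosed (A : Set X) : Prop :=
  ∀ U : Set X, EStarThetaOpen U → A ⊆ U → eStarClTheta A ⊆ U

/-- e*-θ-kernel. -/
def eStarKerTheta (A : Set X) : Set X := ⋂₀ {U | EStarThetaOpen U ∧ A ⊆ U}


lemma deltaCl_mono {A B : Set X} (h : A ⊆ B) : deltaCl A ⊆ deltaCl B := by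
  intro x hx U hU hxU
  obtain ⟨z, hz1, hz2⟩ := hx U hU hxU
  exact ⟨z, hz1, h hz2⟩

lemma eStarOpen_sUnion {S : Set (Set X)} (h : ∀ A ∈ S, EStarOpen A) :
    EStarOpen (⋃₀ S) := by
  intro x hx
  obtain ⟨A, hA, hxA⟩ := hx
  exact closure_mono (interior_mono (deltaCl_mono (subset_sUnion_of_mem hA))) (h A hA hxA)

lemma subset_eStarCl (A : Set X) : A ⊆ eStarCl A := fun _ hx =>
  mem_sInter.2 fun _ hF => hF.2 hx

lemma eStarCl_subset {A F : Set X} (hF : EStarClosed F) (h : A ⊆ F) : eStarCl A ⊆ F :=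
  sInter_subset_of_mem ⟨hF, h⟩

lemma eStarClosed_eStarCl (A : Set X) : EStarClosed (eStarCl A) := by
  unfold EStarClosed
  rw [eStarCl, compl_sInter]
  apply eStarOpen_sUnion
  rintro B ⟨F, ⟨hF, _⟩, rfl⟩
  exact hF

lemma eStarClosed_compl {U : Set X} (hU : EStarOpen U) : EStarClosed Uᶜ := by
  unfold EStarClosed
  rwa [compl_compl]

lemma not_mem_eStarCl_of {A U : Set X} {x : X} (hU : EStarOpen U) (hxU : x ∈ U)
    (hd : Disjoint U A) : x ∉ eStarCl A := by
  intro hx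
  have h1 : eStarCl A ⊆ Uᶜ :=
    eStarCl_subset (eStarClosed_compl hU) (subset_compl_iff_disjoint_left.2 hd)
  exact h1 hx hxU

lemma r0_aux (h : ∀ x : X, eStarClTheta {x} = eStarCl {x}) {x y : X}
    (hxy : x ∈ eStarCl {y}) : y ∈ eStarCl {x} := by
  by_contra hy
  rw [← h] at hy
  simp only [eStarClTheta, mem_setOf_eq, not_forall] at hy
  obtain ⟨U, hU, hyU, hUx⟩ := hy
  have h1 : eStarCl {y} ⊆ eStarCl U :=
    eStarCl_subset (eStarClosed_eStarCl U)
      (singleton_subset_iff.2 (subset_eStarCl U hyU))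
  exact hUx ⟨x, h1 hxy, rfl⟩

lemma r0_subset (h : ∀ x : X, eStarClTheta {x} = eStarCl {x}) {x : X} {U : Set X}
    (hU : EStarOpen U) (hxU : x ∈ U) : eStarCl {x} ⊆ U := by
  intro z hz
  by_contra hzU
  have hxz : x ∈ eStarCl {z} := r0_aux h hz
  have : eStarCl {z} ⊆ Uᶜ :=
    eStarCl_subset (eStarClosed_compl hU) (singleton_subset_iff.2 hzU)
  exact this hxz hxU

theorem stmt19 :
    (∀ x y : X, eStarCl {x} ≠ eStarCl {y} →
      ∃ U V : Set X, EStarOpen U ∧ EStarOpen V ∧ Disjoint U V ∧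
        eStarCl {x} ⊆ U ∧ eStarCl {y} ⊆ V) ↔
    (∀ x : X, eStarClTheta {x} = eStarCl {x}) := by
  constructor
  · intro h x
    ext z
    constructor
    · intro hz
      by_contra hzc
      have hne : eStarCl {z} ≠ eStarCl ({x} : Set X) := by
        intro he
        exact hzc (he ▸ subset_eStarCl {z} rfl)
      obtain ⟨U, V, hU, hV, hd, hzU, hxV⟩ := h z x hne
      obtain ⟨w, hw1, hw2⟩ := hz U hU (hzU (subset_eStarCl {z} rfl))
      have hUV : eStarCl U ⊆ Vᶜ :=
        eStarCl_subset (eStarClosed_compl hV) (subset_compl_iff_disjoint_left.2 hd.symm)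
      exact hUV hw1 (hw2 ▸ hxV (subset_eStarCl {x} rfl))
    · intro hz U hU hzU
      have hx : x ∈ U := by
        by_contra hxU
        exact not_mem_eStarCl_of hU hzU
          (disjoint_singleton_right.2 hxU) hz
      exact ⟨x, subset_eStarCl U hx, rfl⟩
  · intro h x y hne
    have hy : y ∉ eStarCl ({x} : Set X) := by
      intro hy
      apply hne
      apply Subset.antisymm
      · exact eStarCl_subset (eStarClosed_eStarCl {y})
          (singleton_subset_iff.2 (r0_aux h hy))
      · exact eStarCl_subset (eStarClosed_eStarCl {x}) (singleton_subset_iff.2 hy)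
    rw [← h] at hy
    simp only [eStarClTheta, mem_setOf_eq, not_forall] at hy
    obtain ⟨U, hU, hyU, hUx⟩ := hy
    have hxV : x ∈ (eStarCl U)ᶜ := fun hx => hUx ⟨x, hx, rfl⟩
    have hV : EStarOpen (eStarCl U)ᶜ := eStarClosed_eStarCl U
    refine ⟨(eStarCl U)ᶜ, U, hV, hU, ?_, ?_, ?_⟩
    · exact disjoint_compl_left_iff_subset.2 (subset_eStarCl U)
    · exact r0_subset h hV hxV
    · exact r0_subset h hU hyU
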